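/- If two inverse sequences of abelian groups are pro-isomorphic, then their derived limits (lim^1) are isomorphic. -/

import Mathlib

open CategoryTheory

universe u

/-- The composition of the bonding maps of an inverse sequence of abelian groups. -/
def bondComp (A : ℕ → AddCommGrpCat.{u}) (f : ∀ i, A (i + 1) ⟶ A i) :
    (i j : ℕ) → i ≤ j → (A j ⟶ A i)
  | i, 0, h => by
      obtain rfl : i = 0 := Nat.le_zero.mp h
      exact 𝟙 (A 0)
  | i, j + 1, h =>
      if h' : i = j + 1 then by subst h'; exact 𝟙 (A (j + 1))
      else f j ≫ bondComp A f i j (by omega)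

/-- A pro-isomorphism (commuting ladder diagram after passing to subsequences)
between two inverse sequences of abelian groups. -/
structure ProIso (A : ℕ → AddCommGrpCat.{u}) (f : ∀ i, A (i + 1) ⟶ A i)
    (B : ℕ → AddCommGrpCat.{u}) (g : ∀ i, B (i + 1) ⟶ B i) where
  I : ℕ → ℕ
  J : ℕ → ℕ
  strictI : StrictMono I
  strictJ : StrictMono J
  hIJ : ∀ k, I k ≤ J k
  hJI : ∀ k, J k ≤ I (k + 1)
  d : ∀ k, B (J k) ⟶ A (I k)
  u : ∀ k, A (I (k + 1)) ⟶ B (J k)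
  comm₁ : ∀ k, u k ≫ d k =
    bondComp A f (I k) (I (k + 1)) (le_of_lt (strictI (Nat.lt_succ_self k)))
  comm₂ : ∀ k, d (k + 1) ≫ u k =
    bondComp B g (J k) (J (k + 1)) (le_of_lt (strictJ (Nat.lt_succ_self k)))

/-- The homomorphism `(g_i) ↦ (g_i − λ_{i+1} g_{i+1})` whose cokernel is `lim¹`. -/
def shiftHom (A : ℕ → AddCommGrpCat.{u}) (f : ∀ i, A (i + 1) ⟶ A i) :
    (∀ i, A i) →+ (∀ i, A i) where
  toFun x := fun i => x i - f i (x (i + 1))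
  map_zero' := by funext i; simp
  map_add' a b := by funext i; simp; abel

/-- The derived limit `lim¹` of an inverse sequence of abelian groups: the quotient of
the product `∏ A i` by the subgroup `{ (g_i − λ_{i+1} g_{i+1}) : g ∈ ∏ A i }`. -/
def lim1 (A : ℕ → AddCommGrpCat.{u}) (f : ∀ i, A (i + 1) ⟶ A i) : Type u :=
  (∀ i, A i) ⧸ (shiftHom A f).range

noncomputable instance (A : ℕ → AddCommGrpCat.{u}) (f : ∀ i, A (i + 1) ⟶ A i) :
    AddCommGroup (lim1 A f) :=
  QuotientAddGroup.Quotient.addCommGroup _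

namespace Lim1Aux
variable (A : ℕ → AddCommGrpCat.{u}) (f : ∀ i, A (i + 1) ⟶ A i)

noncomputable def L (i j : ℕ) : A j ⟶ A i :=
  if h : i ≤ j then bondComp A f i j h else 0

lemma bondComp_eq {i j : ℕ} (h : i ≤ j) : bondComp A f i j h = L A f i j :=
  (dif_pos h).symm

lemma L_self (i : ℕ) : L A f i i = 𝟙 (A i) := by
  rw [L, dif_pos le_rfl]
  cases i with
  | zero => rfl
  | succ n => rw [bondComp, dif_pos rfl]

lemma L_succ {i j : ℕ} (h : i ≤ j) : L A f i (j + 1) = f j ≫ L A f i j := by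
  rw [L, L, dif_pos (by omega), dif_pos h, bondComp, dif_neg (by omega)]

lemma L_left {i j : ℕ} (h : i < j) : L A f i j = L A f (i + 1) j ≫ f i := by
  induction j with
  | zero => omega
  | succ n ih =>
    rcases Nat.lt_or_ge i n with h' | h'
    · rw [L_succ A f (by omega), L_succ A f (by omega), ih h', Category.assoc]
    · obtain rfl : i = n := by omega
      rw [L_succ A f le_rfl, L_self, L_self, Category.comp_id, Category.id_comp]

lemma L_self_apply (i : ℕ) (z : A i) : L A f i i z = z := by rw [L_self]; rfl

lemma L_succ_apply {i j : ℕ} (h : i ≤ j) (z : A (j + 1)) :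
    L A f i (j + 1) z = L A f i j (f j z) := by rw [L_succ A f h]; rfl

lemma L_left_apply {i j : ℕ} (h : i < j) (z : A j) :
    L A f i j z = f i (L A f (i + 1) j z) := by rw [L_left A f h]; rfl

lemma L_cast {j j' : ℕ} (e : j = j') (i : ℕ) (z : A j) :
    L A f i j' (e ▸ z) = L A f i j z := by cases e; rfl

section Subseq
variable (φ : ℕ → ℕ) (hφ : StrictMono φ)

/-- The chain map from the full product to the product over the subsequence. -/
noncomputable def psi : (∀ i, A i) →+ (∀ k, A (φ k)) where
  toFun x := fun k => ∑ j ∈ Finset.Ico (φ k) (φ (k + 1)), L A f (φ k) j (x j)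
  map_zero' := by funext k; simp
  map_add' a b := by
    funext k
    simp only [Pi.add_apply, map_add, Finset.sum_add_distrib]

lemma psi_apply (x : ∀ i, A i) (k : ℕ) :
    psi A f φ x k = ∑ j ∈ Finset.Ico (φ k) (φ (k + 1)), L A f (φ k) j (x j) := rfl

include hφ

lemma psi_shift (x : ∀ i, A i) :
    psi A f φ (shiftHom A f x) =
      shiftHom (fun k => A (φ k)) (fun k => L A f (φ k) (φ (k + 1)))
        (fun k => x (φ k)) := by
  funext k
  have hab : φ k < φ (k + 1) := hφ (Nat.lt_succ_self k)
  show ∑ j ∈ Finset.Ico (φ k) (φ (k + 1)), L A f (φ k) j (x j - f j (x (j + 1)))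
      = x (φ k) - L A f (φ k) (φ (k + 1)) (x (φ (k + 1)))
  have step : ∀ j ∈ Finset.Ico (φ k) (φ (k + 1)),
      L A f (φ k) j (x j - f j (x (j + 1)))
        = L A f (φ k) j (x j) - L A f (φ k) (j + 1) (x (j + 1)) := by
    intro j hj
    rw [map_sub, L_succ_apply A f (Finset.mem_Ico.mp hj).1]
  rw [Finset.sum_congr rfl step,
    Finset.sum_Ico_eq_sum_range (fun j => L A f (φ k) j (x j) - L A f (φ k) (j+1) (x (j+1)))]
  have := Finset.sum_range_sub' (fun i => L A f (φ k) (φ k + i) (x (φ k + i)))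
    (φ (k + 1) - φ k)
  rw [show (∑ i ∈ Finset.range (φ (k+1) - φ k),
        (L A f (φ k) (φ k + i) (x (φ k + i)) - L A f (φ k) (φ k + i + 1) (x (φ k + i + 1))))
      = (L A f (φ k) (φ k + 0) (x (φ k + 0))
        - L A f (φ k) (φ k + (φ (k+1) - φ k)) (x (φ k + (φ (k+1) - φ k)))) from this,
    show φ k + (φ (k + 1) - φ k) = φ (k + 1) by omega, Nat.add_zero,
    L_self_apply]

omit hφ

open Classical in
/-- A set-theoretic section of `psi`, supported on the image of `φ`. -/
noncomputable def sect (w : ∀ k, A (φ k)) : ∀ i, A i := fun i =>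
  if h : ∃ k, φ k = i then h.choose_spec ▸ w h.choose else 0

include hφ

lemma sect_cast (w : ∀ k, A (φ k)) {m k : ℕ} (e : φ m = φ k) :
    (e ▸ w m : A (φ k)) = w k := by
  have hmk : m = k := hφ.injective e
  subst hmk
  rfl

lemma sect_phi (w : ∀ k, A (φ k)) (k : ℕ) : sect A φ w (φ k) = w k := by
  have h : ∃ m, φ m = φ k := ⟨k, rfl⟩
  rw [sect, dif_pos h]
  exact sect_cast A φ hφ w h.choose_spec

lemma psi_sect (w : ∀ k, A (φ k)) : psi A f φ (sect A φ w) = w := by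
  funext k
  rw [psi_apply, Finset.sum_eq_single (φ k)]
  · rw [L_self_apply, sect_phi A φ hφ]
  · intro j hj hne
    have hz : ¬ ∃ m, φ m = j := by
      rintro ⟨m, rfl⟩
      rw [Finset.mem_Ico] at hj
      have h1 : k ≤ m := hφ.le_iff_le.mp hj.1
      have h2 : m < k + 1 := hφ.lt_iff_lt.mp hj.2
      exact hne (congrArg φ (by omega))
    rw [sect, dif_neg hz, map_zero]
  · intro hmem
    exact absurd (Finset.mem_Ico.mpr ⟨le_rfl, hφ (Nat.lt_succ_self k)⟩) hmem

/-- `Kf i` is the least `k` with `i < φ k`. -/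
noncomputable def Kf (i : ℕ) : ℕ :=
  Nat.find (⟨i + 1, lt_of_lt_of_le (Nat.lt_succ_self i) hφ.le_apply⟩ : ∃ k, i < φ k)

lemma lt_phi_Kf (i : ℕ) : i < φ (Kf φ hφ i) :=
  Nat.find_spec (⟨i + 1, lt_of_lt_of_le (Nat.lt_succ_self i) hφ.le_apply⟩ : ∃ k, i < φ k)

lemma phi_le_of_lt_Kf {i m : ℕ} (h : m < Kf φ hφ i) : φ m ≤ i :=
  le_of_not_gt (Nat.find_min
    (⟨i + 1, lt_of_lt_of_le (Nat.lt_succ_self i) hφ.le_apply⟩ : ∃ k, i < φ k) h)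

lemma Kf_phi (k : ℕ) : Kf φ hφ (φ k) = k + 1 := by
  rw [Kf, Nat.find_eq_iff]
  exact ⟨hφ (Nat.lt_succ_self k), fun m hm => not_lt.mpr (hφ.monotone (by omega))⟩

lemma Kf_succ_eq {i : ℕ} (h : i + 1 < φ (Kf φ hφ i)) : Kf φ hφ (i + 1) = Kf φ hφ i := by
  rw [Kf, Nat.find_eq_iff]
  exact ⟨h, fun m hm => not_lt.mpr (by have := phi_le_of_lt_Kf φ hφ hm; omega)⟩

/-- The explicit preimage under `shiftHom` used to prove injectivity. -/
noncomputable def ybuild (x : ∀ i, A i) (w : ∀ k, A (φ k)) : ∀ i, A i := fun i =>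
  (∑ j ∈ Finset.Ico i (φ (Kf φ hφ i)), L A f i j (x j))
    + L A f i (φ (Kf φ hφ i)) (w (Kf φ hφ i))

lemma ybuild_phi (x : ∀ i, A i) (w : ∀ k, A (φ k))
    (hx : psi A f φ x =
      shiftHom (fun k => A (φ k)) (fun k => L A f (φ k) (φ (k + 1))) w) (k : ℕ) :
    ybuild A f φ hφ x w (φ k) = w k := by
  show (∑ j ∈ Finset.Ico (φ k) (φ (Kf φ hφ (φ k))), L A f (φ k) j (x j))
      + L A f (φ k) (φ (Kf φ hφ (φ k))) (w (Kf φ hφ (φ k))) = w k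
  rw [Kf_phi φ hφ k]
  have h1 : (∑ j ∈ Finset.Ico (φ k) (φ (k + 1)), L A f (φ k) j (x j))
      = w k - L A f (φ k) (φ (k + 1)) (w (k + 1)) := by
    rw [← psi_apply, hx]; rfl
  rw [h1, sub_add_cancel]

lemma shift_ybuild (x : ∀ i, A i) (w : ∀ k, A (φ k))
    (hx : psi A f φ x =
      shiftHom (fun k => A (φ k)) (fun k => L A f (φ k) (φ (k + 1))) w) :
    shiftHom A f (ybuild A f φ hφ x w) = x := by
  funext i
  have hlt : i < φ (Kf φ hφ i) := lt_phi_Kf φ hφ i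
  show ybuild A f φ hφ x w i - f i (ybuild A f φ hφ x w (i + 1)) = x i
  rcases eq_or_lt_of_le (Nat.succ_le_of_lt hlt) with he | hlt2
  · -- he : i + 1 = φ (Kf i)
    have hcast : ∀ {a b : ℕ} (e : a = b) (F : ∀ n, (A n : Type u)), F b = e ▸ F a := by
      rintro a b rfl F; rfl
    have h1 : ybuild A f φ hφ x w (φ (Kf φ hφ i)) = w (Kf φ hφ i) :=
      ybuild_phi A f φ hφ x w hx _
    have h2 : f i (ybuild A f φ hφ x w (i + 1))
        = L A f i (φ (Kf φ hφ i)) (w (Kf φ hφ i)) := by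
      have e : φ (Kf φ hφ i) = i + 1 := he.symm
      have h3 : ybuild A f φ hφ x w (i + 1) = e ▸ w (Kf φ hφ i) := by
        rw [hcast e (ybuild A f φ hφ x w), h1]
      rw [h3]
      have h4 : ∀ z : A (i + 1), f i z = L A f i (i + 1) z := fun z => by
        rw [L_succ_apply A f le_rfl, L_self_apply]
      rw [h4, L_cast]
    rw [h2]
    show (∑ j ∈ Finset.Ico i (φ (Kf φ hφ i)), L A f i j (x j))
        + L A f i (φ (Kf φ hφ i)) (w (Kf φ hφ i))
        - L A f i (φ (Kf φ hφ i)) (w (Kf φ hφ i)) = x i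
    have h5 : Finset.Ico i (φ (Kf φ hφ i)) = {i} := by
      rw [← he, Nat.Ico_succ_singleton]
    rw [h5, Finset.sum_singleton, L_self_apply, add_sub_cancel_right]
  · -- hlt2 : i + 1 < φ (Kf i)
    have hK : Kf φ hφ (i + 1) = Kf φ hφ i := Kf_succ_eq φ hφ hlt2
    show (∑ j ∈ Finset.Ico i (φ (Kf φ hφ i)), L A f i j (x j))
        + L A f i (φ (Kf φ hφ i)) (w (Kf φ hφ i))
        - f i ((∑ j ∈ Finset.Ico (i + 1) (φ (Kf φ hφ (i + 1))), L A f (i + 1) j (x j))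
          + L A f (i + 1) (φ (Kf φ hφ (i + 1))) (w (Kf φ hφ (i + 1)))) = x i
    rw [hK, map_add, map_sum]
    have h6 : ∀ j ∈ Finset.Ico (i + 1) (φ (Kf φ hφ i)),
        f i (L A f (i + 1) j (x j)) = L A f i j (x j) := fun j hj =>
      (L_left_apply A f (by have := (Finset.mem_Ico.mp hj).1; omega) (x j)).symm
    rw [Finset.sum_congr rfl h6,
      ← L_left_apply A f hlt (w (Kf φ hφ i)),
      Finset.sum_eq_sum_Ico_succ_bot hlt (fun j => L A f i j (x j)), L_self_apply]
    abel

end Subseq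
end Lim1Aux

namespace Lim1Aux
variable (A : ℕ → AddCommGrpCat.{u}) (f : ∀ i, A (i + 1) ⟶ A i)

/-- `lim¹` is invariant under passing to a subsequence. -/
noncomputable def subseqEquiv (φ : ℕ → ℕ) (hφ : StrictMono φ) :
    lim1 A f ≃+ lim1 (fun k => A (φ k)) (fun k => L A f (φ k) (φ (k + 1))) := by
  let A' : ℕ → AddCommGrpCat.{u} := fun k => A (φ k)
  let f' : ∀ k, A' (k + 1) ⟶ A' k := fun k => L A f (φ k) (φ (k + 1))
  have hle : (shiftHom A f).range ≤
      AddSubgroup.comap (psi A f φ) (shiftHom A' f').range := by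
    rintro _ ⟨x, rfl⟩
    exact ⟨fun k => x (φ k), (psi_shift A f φ hφ x).symm⟩
  let Ψ : lim1 A f →+ lim1 A' f' :=
    QuotientAddGroup.map (shiftHom A f).range (shiftHom A' f').range (psi A f φ) hle
  refine AddEquiv.ofBijective Ψ ⟨(injective_iff_map_eq_zero Ψ).mpr ?_, ?_⟩
  · intro z hz
    induction z using QuotientAddGroup.induction_on with
    | H x =>
      replace hz : (QuotientAddGroup.mk (psi A f φ x) : lim1 A' f') = 0 := hz
      rw [QuotientAddGroup.eq_zero_iff] at hz
      obtain ⟨w, hw⟩ := hz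
      refine (QuotientAddGroup.eq_zero_iff (N := (shiftHom A f).range) x).mpr ?_
      exact ⟨ybuild A f φ hφ x w, shift_ybuild A f φ hφ x w hw.symm⟩
  · intro z
    induction z using QuotientAddGroup.induction_on with
    | H w =>
      exact ⟨QuotientAddGroup.mk (sect A φ w), by
        show QuotientAddGroup.mk (psi A f φ (sect A φ w)) = _
        rw [psi_sect A f φ hφ w]⟩

variable (B : ℕ → AddCommGrpCat.{u}) (g : ∀ i, B (i + 1) ⟶ B i) (P : ProIso A f B g)

/-- The downward rungs of the ladder, as a map of products. -/
def Dmap : (∀ k, B (P.J k)) →+ (∀ k, A (P.I k)) where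
  toFun w := fun k => P.d k (w k)
  map_zero' := by funext k; simp
  map_add' a b := by funext k; simp

/-- The upward rungs of the ladder, as a (shifted) map of products. -/
def Umap : (∀ k, A (P.I k)) →+ (∀ k, B (P.J k)) where
  toFun x := fun k => P.u k (x (k + 1))
  map_zero' := by funext k; simp
  map_add' a b := by funext k; simp

lemma hdu (k : ℕ) (z : A (P.I (k + 1))) :
    P.d k (P.u k z) = L A f (P.I k) (P.I (k + 1)) z := by
  rw [← bondComp_eq A f (le_of_lt (P.strictI (Nat.lt_succ_self k))), ← P.comm₁ k]; rfl

lemma hud (k : ℕ) (z : B (P.J (k + 1))) :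
    P.u k (P.d (k + 1) z) = L B g (P.J k) (P.J (k + 1)) z := by
  rw [← bondComp_eq B g (le_of_lt (P.strictJ (Nat.lt_succ_self k))), ← P.comm₂ k]; rfl

lemma Dmap_shift (w : ∀ k, B (P.J k)) :
    Dmap A f B g P (shiftHom (fun k => B (P.J k)) (fun k => L B g (P.J k) (P.J (k + 1))) w)
      = shiftHom (fun k => A (P.I k)) (fun k => L A f (P.I k) (P.I (k + 1)))
          (Dmap A f B g P w) := by
  funext k
  show P.d k (w k - L B g (P.J k) (P.J (k + 1)) (w (k + 1)))
      = P.d k (w k) - L A f (P.I k) (P.I (k + 1)) (P.d (k + 1) (w (k + 1)))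
  rw [map_sub, ← hud A f B g P k, ← hdu A f B g P k]

lemma Umap_shift (x : ∀ k, A (P.I k)) :
    Umap A f B g P (shiftHom (fun k => A (P.I k)) (fun k => L A f (P.I k) (P.I (k + 1))) x)
      = shiftHom (fun k => B (P.J k)) (fun k => L B g (P.J k) (P.J (k + 1)))
          (Umap A f B g P x) := by
  funext k
  show P.u k (x (k + 1) - L A f (P.I (k + 1)) (P.I (k + 2)) (x (k + 2)))
      = P.u k (x (k + 1)) - L B g (P.J k) (P.J (k + 1)) (P.u (k + 1) (x (k + 2)))
  rw [map_sub, ← hdu A f B g P (k + 1), ← hud A f B g P k]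

lemma Dmap_Umap (x : ∀ k, A (P.I k)) :
    Dmap A f B g P (Umap A f B g P x)
      = x - shiftHom (fun k => A (P.I k)) (fun k => L A f (P.I k) (P.I (k + 1))) x := by
  funext k
  show P.d k (P.u k (x (k + 1)))
      = x k - (x k - L A f (P.I k) (P.I (k + 1)) (x (k + 1)))
  rw [hdu A f B g P k, sub_sub_cancel]

lemma Umap_Dmap (w : ∀ k, B (P.J k)) :
    Umap A f B g P (Dmap A f B g P w)
      = w - shiftHom (fun k => B (P.J k)) (fun k => L B g (P.J k) (P.J (k + 1))) w := by
  funext k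
  show P.u k (P.d (k + 1) (w (k + 1)))
      = w k - (w k - L B g (P.J k) (P.J (k + 1)) (w (k + 1)))
  rw [hud A f B g P k, sub_sub_cancel]

/-- The ladder maps induce an isomorphism between the `lim¹`s of the two subsequences. -/
noncomputable def ladderEquiv :
    lim1 (fun k => B (P.J k)) (fun k => L B g (P.J k) (P.J (k + 1)))
      ≃+ lim1 (fun k => A (P.I k)) (fun k => L A f (P.I k) (P.I (k + 1))) := by
  let B' : ℕ → AddCommGrpCat.{u} := fun k => B (P.J k)
  let g' : ∀ k, B' (k + 1) ⟶ B' k := fun k => L B g (P.J k) (P.J (k + 1))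
  let A' : ℕ → AddCommGrpCat.{u} := fun k => A (P.I k)
  let f' : ∀ k, A' (k + 1) ⟶ A' k := fun k => L A f (P.I k) (P.I (k + 1))
  have hleD : (shiftHom B' g').range ≤
      AddSubgroup.comap (Dmap A f B g P) (shiftHom A' f').range := by
    rintro _ ⟨w, rfl⟩
    exact ⟨Dmap A f B g P w, (Dmap_shift A f B g P w).symm⟩
  have hleU : (shiftHom A' f').range ≤
      AddSubgroup.comap (Umap A f B g P) (shiftHom B' g').range := by
    rintro _ ⟨x, rfl⟩
    exact ⟨Umap A f B g P x, (Umap_shift A f B g P x).symm⟩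
  let D : lim1 B' g' →+ lim1 A' f' :=
    QuotientAddGroup.map (shiftHom B' g').range (shiftHom A' f').range (Dmap A f B g P) hleD
  let U : lim1 A' f' →+ lim1 B' g' :=
    QuotientAddGroup.map (shiftHom A' f').range (shiftHom B' g').range (Umap A f B g P) hleU
  refine ⟨⟨D, U, ?_, ?_⟩, D.map_add⟩
  · intro z
    induction z using QuotientAddGroup.induction_on with
    | H w =>
      show QuotientAddGroup.mk (Umap A f B g P (Dmap A f B g P w)) = _
      rw [Umap_Dmap A f B g P w, QuotientAddGroup.mk_sub,
        (QuotientAddGroup.eq_zero_iff (N := (shiftHom B' g').range) _).mpr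
          (AddMonoidHom.mem_range.mpr ⟨w, rfl⟩), sub_zero]
  · intro z
    induction z using QuotientAddGroup.induction_on with
    | H x =>
      show QuotientAddGroup.mk (Dmap A f B g P (Umap A f B g P x)) = _
      rw [Dmap_Umap A f B g P x, QuotientAddGroup.mk_sub,
        (QuotientAddGroup.eq_zero_iff (N := (shiftHom A' f').range) _).mpr
          (AddMonoidHom.mem_range.mpr ⟨x, rfl⟩), sub_zero]

end Lim1Aux


/-- Pro-isomorphic inverse sequences of abelian groups have isomorphic derived limits. -/
theorem lim1_iso_of_proIso (A : ℕ → AddCommGrpCat.{u}) (f : ∀ i, A (i + 1) ⟶ A i)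
    (B : ℕ → AddCommGrpCat.{u}) (g : ∀ i, B (i + 1) ⟶ B i)
    (h : Nonempty (ProIso A f B g)) :
    Nonempty (lim1 A f ≃+ lim1 B g) := by
  obtain ⟨P⟩ := h
  refine ⟨(Lim1Aux.subseqEquiv A f P.I P.strictI).trans
    (((Lim1Aux.ladderEquiv A f B g P).symm).trans
      (Lim1Aux.subseqEquiv B g P.J P.strictJ).symm)⟩
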